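/- arXiv:2302.01325 — 6 statements merged into one kernel-verified Lean document; each statement's English description precedes it below -/
import Mathlib

section
/- Let d ≥ 2 and let ω = e^{2πi/d}. Suppose W(x) = λ₀ + λ₁x + ... + λ_{d-1}x^{d-1} is a polynomial with rational coefficients such that ω^n is a root of W for every proper divisor n of d (i.e., n ≠ d and d/n ∈ ℕ). Then λ₀ = λ₁ = ... = λ_{d-1}. -/
noncomputable def rootOfUnity (d : ℕ) : ℂ := Complex.exp (2 * Real.pi * Complex.I / d)

theorem proper_divisor_roots_imply_equal_coeffs (d : ℕ) (hd : 2 ≤ d) (lam : Fin d → ℚ)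
    (hroot : ∀ n : ℕ, 0 < n → n ∣ d → n ≠ d →
      ∑ i : Fin d, (lam i : ℂ) * (rootOfUnity d) ^ (n * (i : ℕ)) = 0) :
    ∀ i j : Fin d, lam i = lam j := by
  have hd0 : 0 < d := by omega
  have hω : IsPrimitiveRoot (rootOfUnity d) d :=
    Complex.isPrimitiveRoot_exp d (by omega)
  set p : Polynomial ℚ := ∑ i : Fin d, Polynomial.C (lam i) * Polynomial.X ^ (i : ℕ) with hp
  set g : Polynomial ℚ := ∑ i ∈ Finset.range d, Polynomial.X ^ i with hg
  -- each cyclotomic m for m | d, m ≠ 1 divides p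
  have hdvd : ∀ m ∈ d.divisors.erase 1, Polynomial.cyclotomic m ℚ ∣ p := by
    intro m hm
    simp only [Finset.mem_erase, Nat.mem_divisors] at hm
    obtain ⟨hm1, ⟨n, hn⟩, _⟩ := hm
    have hmpos : 0 < m := by
      rcases Nat.eq_zero_or_pos m with h | h
      · subst h; simp at hn; omega
      · exact h
    have hnpos : 0 < n := by
      rcases Nat.eq_zero_or_pos n with h | h
      · subst h; simp at hn; omega
      · exact h
    have hnd : n ≠ d := by
      rintro rfl
      have : m = 1 := by
        have := hn
        nlinarith
      exact hm1 this
    have hprim : IsPrimitiveRoot ((rootOfUnity d) ^ n) m :=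
      hω.pow hd0 (by rw [hn, mul_comm])
    rw [Polynomial.cyclotomic_eq_minpoly_rat hprim hmpos]
    apply minpoly.dvd
    rw [hp]
    have := hroot n hnpos ⟨m, by rw [hn, mul_comm]⟩ hnd
    simp only [map_sum, map_mul, Polynomial.aeval_C, Polynomial.aeval_X_pow, ← pow_mul,
      eq_ratCast]
    exact this
  -- the geometric sum divides p
  have hgdvd : g ∣ p := by
    rw [hg, ← Polynomial.prod_cyclotomic_eq_geom_sum hd0]
    apply Finset.prod_dvd_of_coprime _ hdvd
    intro a ha b hb hab
    exact Polynomial.cyclotomic.isCoprime_rat hab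
  -- coefficients of p and g
  have hcoeffp : ∀ i : Fin d, p.coeff (i : ℕ) = lam i := by
    intro i
    rw [hp, Polynomial.finset_sum_coeff]
    simp only [Polynomial.coeff_C_mul, Polynomial.coeff_X_pow]
    rw [Finset.sum_eq_single i]
    · simp
    · intro j _ hj
      have : (i : ℕ) ≠ (j : ℕ) := fun h => hj (Fin.ext h.symm)
      simp [this]
    · intro h; exact absurd (Finset.mem_univ i) h
  have hcoeffg : ∀ i : Fin d, g.coeff (i : ℕ) = 1 := by
    intro i
    rw [hg, Polynomial.finset_sum_coeff]
    simp only [Polynomial.coeff_X_pow]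
    rw [Finset.sum_eq_single (i : ℕ)]
    · simp
    · intro j _ hj; simp [Ne.symm hj]
    · intro h; exact absurd (Finset.mem_range.2 i.isLt) h
  -- degree bounds
  have hdegp : p.natDegree ≤ d - 1 := by
    rw [hp]
    apply Polynomial.natDegree_sum_le_of_forall_le
    intro i _
    refine le_trans (Polynomial.natDegree_C_mul_le _ _) ?_
    rw [Polynomial.natDegree_X_pow]
    omega
  have hdegg : g.natDegree = d - 1 := by
    refine le_antisymm ?_ ?_
    · rw [hg]
      apply Polynomial.natDegree_sum_le_of_forall_le
      intro i hi
      rw [Polynomial.natDegree_X_pow]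
      exact Nat.le_sub_one_of_lt (Finset.mem_range.1 hi)
    · apply Polynomial.le_natDegree_of_ne_zero
      have := hcoeffg ⟨d - 1, by omega⟩
      simp only at this
      rw [this]
      exact one_ne_zero
  obtain ⟨q, hq⟩ := hgdvd
  have hgne : g ≠ 0 := (Polynomial.monic_geom_sum_X (by omega : d ≠ 0)).ne_zero
  -- q is a constant
  have hc : ∀ i : Fin d, lam i = q.coeff 0 := by
    rcases eq_or_ne q 0 with rfl | hq0
    · intro i
      rw [← hcoeffp i, hq]
      simp
    · have hpne : p ≠ 0 := by
        rw [hq]; exact mul_ne_zero hgne hq0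
      have : p.natDegree = g.natDegree + q.natDegree := by
        rw [hq, Polynomial.natDegree_mul hgne hq0]
      have hq0' : q.natDegree = 0 := by omega
      have hqC : q = Polynomial.C (q.coeff 0) := Polynomial.eq_C_of_natDegree_eq_zero hq0'
      intro i
      rw [← hcoeffp i, hq, hqC, Polynomial.coeff_mul_C, hcoeffg i, one_mul]
      simp
  intro i j
  rw [hc i, hc j]
end

section
/- For any integers d ≥ 2, 1 ≤ k ≤ d−1, and 0 ≤ i ≤ d−1, with ω = e^{2πi/d}, one has Σ_{j=0, j≠i}^{d-1} (1 − ω^{k(j−i)})/(1 − ω^{i−j}) = k. -/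
lemma aux_ratio (z : ℂ) (hz0 : z ≠ 0) (hz1 : z ≠ 1) (k : ℕ) :
    (1 - z ^ k) / (1 - z⁻¹) = -∑ m ∈ Finset.range k, z ^ (m + 1) := by
  have h1 : z⁻¹ ≠ 1 := by simp [inv_eq_one, hz1]
  have h1' : (1 : ℂ) - z⁻¹ ≠ 0 := sub_ne_zero.mpr (Ne.symm h1)
  have h2 : z - 1 ≠ 0 := sub_ne_zero.mpr hz1
  have hgeom : ∑ m ∈ Finset.range k, z ^ m = (z ^ k - 1) / (z - 1) := geom_sum_eq hz1 k
  have hstep : ∑ m ∈ Finset.range k, z ^ (m + 1) = z * ((z ^ k - 1) / (z - 1)) := by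
    rw [← hgeom, Finset.mul_sum]
    exact Finset.sum_congr rfl fun m _ => by ring
  rw [hstep]
  field_simp
  ring

theorem sum_ratio_roots_eq (d : ℕ) (hd : 2 ≤ d) (k : ℕ) (hk1 : 1 ≤ k) (hk2 : k ≤ d - 1)
    (i : Fin d) :
    ∑ j ∈ Finset.univ.erase i,
      (1 - (rootOfUnity d) ^ ((k : ℤ) * ((j : ℤ) - (i : ℤ)))) /
        (1 - (rootOfUnity d) ^ ((i : ℤ) - (j : ℤ))) = (k : ℂ) := by
  have hd0 : d ≠ 0 := by omega
  set ω := rootOfUnity d with hωdef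
  have hω : IsPrimitiveRoot ω d := by
    rw [hωdef, rootOfUnity]; exact Complex.isPrimitiveRoot_exp d hd0
  have hω0 : ω ≠ 0 := by
    rw [hωdef, rootOfUnity]; exact Complex.exp_ne_zero _
  have hωd : ω ^ d = 1 := hω.pow_eq_one
  have hne1 : ∀ j : Fin d, j ≠ i → ω ^ ((j : ℤ) - (i : ℤ)) ≠ 1 := by
    intro j hj h
    rw [hω.zpow_eq_one_iff_dvd] at h
    have habs : |(j : ℤ) - (i : ℤ)| < (d : ℤ) := by
      have h1 := j.isLt; have h2 := i.isLt
      rw [abs_lt]; omega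
    have := Int.eq_zero_of_abs_lt_dvd h habs
    apply hj
    exact Fin.ext (by omega)
  -- rewrite each term
  have hterm : ∀ j ∈ Finset.univ.erase i,
      (1 - ω ^ ((k : ℤ) * ((j : ℤ) - (i : ℤ)))) / (1 - ω ^ ((i : ℤ) - (j : ℤ)))
      = -∑ m ∈ Finset.range k, (ω ^ ((j : ℤ) - (i : ℤ))) ^ (m + 1) := by
    intro j hj
    have hji : j ≠ i := Finset.ne_of_mem_erase hj
    have hz1 := hne1 j hji
    have hz0 : ω ^ ((j : ℤ) - (i : ℤ)) ≠ 0 := zpow_ne_zero _ hω0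
    have e1 : ω ^ ((k : ℤ) * ((j : ℤ) - (i : ℤ))) = (ω ^ ((j : ℤ) - (i : ℤ))) ^ k := by
      rw [mul_comm, zpow_mul, zpow_natCast]
    have e2 : ω ^ ((i : ℤ) - (j : ℤ)) = (ω ^ ((j : ℤ) - (i : ℤ)))⁻¹ := by
      rw [← zpow_neg, neg_sub]
    rw [e1, e2, aux_ratio _ hz0 hz1]
  rw [Finset.sum_congr rfl hterm, Finset.sum_neg_distrib, Finset.sum_comm]
  -- inner sum over j for fixed m
  have hinner : ∀ m ∈ Finset.range k,
      ∑ j ∈ Finset.univ.erase i, (ω ^ ((j : ℤ) - (i : ℤ))) ^ (m + 1) = -1 := by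
    intro m hm
    have hmk : m + 1 < d := by
      have := Finset.mem_range.mp hm; omega
    have hζ1 : (ω ^ (m + 1) : ℂ) ≠ 1 := hω.pow_ne_one_of_pos_of_lt (by omega) hmk
    have hζd : (ω ^ (m + 1) : ℂ) ^ d = 1 := by
      rw [← pow_mul, mul_comm, pow_mul, hωd, one_pow]
    have hsum0 : ∑ j : Fin d, (ω ^ ((j : ℤ) - (i : ℤ))) ^ (m + 1) = 0 := by
      have : ∀ j : Fin d, (ω ^ ((j : ℤ) - (i : ℤ))) ^ (m + 1)
          = (ω ^ (m + 1)) ^ (j : ℕ) * (ω ^ ((-(i : ℤ)) * (m + 1))) := by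
        intro j
        have hj : ((ω : ℂ) ^ (m + 1)) ^ (j : ℕ) = ω ^ ((j : ℤ) * (m + 1)) := by
          rw [← pow_mul, ← zpow_natCast]
          congr 1; push_cast; ring
        rw [← zpow_natCast (ω ^ ((j : ℤ) - (i : ℤ))), ← zpow_mul, hj, ← zpow_add₀ hω0]
        congr 1; push_cast; ring
      rw [Finset.sum_congr rfl fun j _ => this j, ← Finset.sum_mul]
      have : ∑ j : Fin d, (ω ^ (m + 1)) ^ (j : ℕ) = 0 := by
        rw [Fin.sum_univ_eq_sum_range (fun n => (ω ^ (m + 1)) ^ n)]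
        rw [geom_sum_eq hζ1, hζd]
        simp
      rw [this, zero_mul]
    have hsplit := Finset.add_sum_erase Finset.univ
      (fun j : Fin d => (ω ^ ((j : ℤ) - (i : ℤ))) ^ (m + 1)) (Finset.mem_univ i)
    rw [hsum0] at hsplit
    simp only [sub_self, zpow_zero, one_pow] at hsplit
    linear_combination hsplit
  rw [Finset.sum_congr rfl hinner]
  simp
end

section
/- Let A₀ and A₁ be unitary operators on ℂ^d whose eigenbases {|s_i⟩} and {|t_j⟩} are mutually unbiased, i.e. |⟨s_i|t_j⟩|² = 1/d for all i,j. Then A₀ and A₁ have no common nontrivial invariant subspace: if V ⊆ ℂ^d satisfies A₀V ⊆ V, A₁V ⊆ V and 0 < dim V, then V = ℂ^d. -/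
open Finset Polynomial

private lemma pow_mem_inv {E : Type*} [AddCommGroup E] [Module ℂ E]
    (A : E →ₗ[ℂ] E) (V : Submodule ℂ E) (hV : V.map A ≤ V)
    (n : ℕ) (v : E) (hv : v ∈ V) : (A ^ n) v ∈ V := by
  induction n with
  | zero => simpa using hv
  | succ n ih =>
    rw [pow_succ', Module.End.mul_apply]
    exact hV ⟨_, ih, rfl⟩

private lemma aeval_mem {E : Type*} [AddCommGroup E] [Module ℂ E]
    (A : E →ₗ[ℂ] E) (V : Submodule ℂ E) (hV : V.map A ≤ V)
    (p : ℂ[X]) (v : E) (hv : v ∈ V) : (Polynomial.aeval A p) v ∈ V := by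
  induction p using Polynomial.induction_on' with
  | add p q hp hq =>
    rw [map_add, LinearMap.add_apply]
    exact V.add_mem hp hq
  | monomial n a =>
    rw [Polynomial.aeval_monomial]
    simp only [Module.End.mul_apply, Module.algebraMap_end_apply]
    exact V.smul_mem a (pow_mem_inv A V hV n v hv)

private lemma eig_comp_mem {d : ℕ}
    (A : EuclideanSpace ℂ (Fin d) →ₗ[ℂ] EuclideanSpace ℂ (Fin d))
    (s : OrthonormalBasis (Fin d) ℂ (EuclideanSpace ℂ (Fin d)))
    (lam : Fin d → ℂ) (hA : ∀ i, A (s i) = lam i • s i)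
    (hinj : Function.Injective lam)
    (V : Submodule ℂ (EuclideanSpace ℂ (Fin d))) (hV : V.map A ≤ V)
    (v : EuclideanSpace ℂ (Fin d)) (hv : v ∈ V) (i : Fin d) :
    (s.repr v i) • s i ∈ V := by
  set p : ℂ[X] := ∏ k ∈ univ.erase i, (X - C (lam k)) with hp
  have hsne : ∀ j, s j ≠ 0 := fun j => by simpa using s.toBasis.ne_zero j
  have heig : ∀ j, Module.End.HasEigenvector A (lam j) (s j) := by
    intro j
    rw [Module.End.hasEigenvector_iff]
    exact ⟨Module.End.mem_eigenspace_iff.mpr (hA j), hsne j⟩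
  have heval : ∀ j, p.eval (lam j) = ∏ k ∈ univ.erase i, (lam j - lam k) := by
    intro j; simp [hp, Polynomial.eval_prod]
  have hBv : (Polynomial.aeval A p) v ∈ V := aeval_mem A V hV p v hv
  have hBv2 : (Polynomial.aeval A p) v
      = (∏ k ∈ univ.erase i, (lam i - lam k)) • ((s.repr v i) • s i) := by
    conv_lhs => rw [← s.sum_repr v]
    rw [map_sum]
    rw [Finset.sum_eq_single i]
    · rw [map_smul, Module.End.aeval_apply_of_hasEigenvector (heig i), heval i, smul_comm]
    · intro j _ hj
      rw [map_smul, Module.End.aeval_apply_of_hasEigenvector (heig j), heval j,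
        Finset.prod_eq_zero (Finset.mem_erase.mpr ⟨hj, Finset.mem_univ j⟩) (by simp)]
      simp
    · intro h; exact absurd (Finset.mem_univ i) h
  have hc : (∏ k ∈ univ.erase i, (lam i - lam k)) ≠ 0 := by
    rw [Finset.prod_ne_zero_iff]
    intro k hk
    exact sub_ne_zero.mpr fun h => (Finset.mem_erase.mp hk).1 (hinj h.symm)
  have := V.smul_mem (∏ k ∈ univ.erase i, (lam i - lam k))⁻¹ (hBv2 ▸ hBv)
  rwa [smul_smul, inv_mul_cancel₀ hc, one_smul] at this

theorem mub_observables_no_common_invariant_subspace (d : ℕ) (hd : 0 < d)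
    (A0 A1 : EuclideanSpace ℂ (Fin d) →ₗ[ℂ] EuclideanSpace ℂ (Fin d))
    (s t : OrthonormalBasis (Fin d) ℂ (EuclideanSpace ℂ (Fin d)))
    (hA0 : ∀ i, A0 (s i) = (rootOfUnity d) ^ (i : ℕ) • s i)
    (hA1 : ∀ i, A1 (t i) = (rootOfUnity d) ^ (i : ℕ) • t i)
    (hMUB : ∀ i j, ‖(inner ℂ (s i) (t j) : ℂ)‖ ^ 2 = 1 / d)
    (V : Submodule ℂ (EuclideanSpace ℂ (Fin d)))
    (hV0 : V.map A0 ≤ V) (hV1 : V.map A1 ≤ V) (hVne : V ≠ ⊥) :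
    V = ⊤ := by
  have hprim : IsPrimitiveRoot (rootOfUnity d) d := Complex.isPrimitiveRoot_exp d hd.ne'
  have hinj : Function.Injective (fun i : Fin d => (rootOfUnity d) ^ (i : ℕ)) := by
    intro a b hab
    exact Fin.ext (hprim.pow_inj a.isLt b.isLt hab)
  obtain ⟨v, hvV, hvne⟩ := Submodule.exists_mem_ne_zero_of_ne_bot hVne
  have : ∃ i, s.repr v i ≠ 0 := by
    by_contra h
    push_neg at h
    apply hvne
    have h0 : s.repr v = 0 := by ext i; exact h i
    have := congrArg s.repr.symm h0
    simpa using this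
  obtain ⟨i, hi⟩ := this
  have hsi : s i ∈ V := by
    have h1 := eig_comp_mem A0 s (fun i => (rootOfUnity d) ^ (i : ℕ)) hA0 hinj V hV0 v hvV i
    have := V.smul_mem (s.repr v i)⁻¹ h1
    rwa [smul_smul, inv_mul_cancel₀ hi, one_smul] at this
  have htj : ∀ j, t j ∈ V := by
    intro j
    have hcoef : t.repr (s i) j ≠ 0 := by
      rw [t.repr_apply_apply]
      intro h
      have hm := hMUB i j
      rw [← inner_conj_symm, h] at hm
      simp only [map_zero, norm_zero] at hm
      have h0 : (0:ℝ) = 1 / d := by simpa using hm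
      have hd' : (0:ℝ) < 1 / d := by positivity
      linarith
    have h1 := eig_comp_mem A1 t (fun i => (rootOfUnity d) ^ (i : ℕ)) hA1 hinj V hV1 (s i) hsi j
    have := V.smul_mem (t.repr (s i) j)⁻¹ h1
    rwa [smul_smul, inv_mul_cancel₀ hcoef, one_smul] at this
  rw [eq_top_iff, ← t.toBasis.span_eq, Submodule.span_le]
  rintro x ⟨j, rfl⟩
  simpa using htj j
end

section
/- Let α₀,...,α_{d-1} > 0 with Σᵢ αᵢ² = 1, and define γ(α) = d / (Σ_{i≠j} αᵢ/α_j) and δ_k(α) = −(γ(α)/d) Σ_{i≠j} (αᵢ/α_j) ω^{k(d−j)} for k = 1,...,d−1, where ω = e^{2πi/d}. Then the matrix Z̃ = (1 + γ(α))𝟙 − Σ_{k=1}^{d-1} δ_k(α) Z_d^k (with Z_d = Σ_l ω^l |l⟩⟨l|) is diagonal with eigenvalues λ_l = (γ(α)/α_l)·Σᵢ αᵢ > 0 for each l; in particular Z̃ is positive definite and invertible. -/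
open Matrix

/-- The clock matrix `Z_d = ∑ ω^l |l⟩⟨l|`. -/
noncomputable def clockZ (d : ℕ) : Matrix (Fin d) (Fin d) ℂ :=
  Matrix.diagonal fun l => (rootOfUnity d) ^ (l : ℕ)

lemma rootOfUnity_primitive (d : ℕ) (hd : d ≠ 0) : IsPrimitiveRoot (rootOfUnity d) d :=
  Complex.isPrimitiveRoot_exp d hd

lemma geo_sum (d : ℕ) (hd : d ≠ 0) (m : ℕ) :
    ∑ k ∈ Finset.range d, (rootOfUnity d) ^ (k * m) = if d ∣ m then (d : ℂ) else 0 := by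
  have hp := rootOfUnity_primitive d hd
  have h1 : ∀ k, (rootOfUnity d) ^ (k * m) = ((rootOfUnity d) ^ m) ^ k := fun k => by
    rw [← pow_mul, mul_comm]
  simp only [h1]
  by_cases hdvd : d ∣ m
  · rw [(hp.pow_eq_one_iff_dvd m).2 hdvd]
    simp [hdvd]
  · rw [if_neg hdvd, geom_sum_eq (fun h => hdvd ((hp.pow_eq_one_iff_dvd m).1 h))]
    rw [← pow_mul, mul_comm m d, pow_mul, hp.pow_eq_one]
    simp

lemma icc_sum_eq (d : ℕ) (hd : 2 ≤ d) (g : ℕ → ℂ) :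
    ∑ k ∈ Finset.Icc 1 (d - 1), g k = (∑ k ∈ Finset.range d, g k) - g 0 := by
  have h : Finset.Icc 1 (d - 1) = (Finset.range d).erase 0 := by
    ext k
    simp only [Finset.mem_Icc, Finset.mem_erase, Finset.mem_range]
    omega
  rw [h, Finset.sum_erase_eq_sub (by simp; omega)]

lemma dvd_iff_eq (d : ℕ) (j l : Fin d) : d ∣ (d - (j : ℕ) + (l : ℕ)) ↔ j = l := by
  have hj := j.isLt; have hl := l.isLt
  constructor
  · intro h
    have h1 : d - (j : ℕ) + (l : ℕ) = d :=
      Nat.eq_of_dvd_of_lt_two_mul (by omega) h (by omega)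
    exact Fin.ext (by omega)
  · rintro rfl
    have : d - (j : ℕ) + (j : ℕ) = d := by omega
    simp [this]

theorem Ztilde_positive_definite (d : ℕ) (hd : 2 ≤ d) (α : Fin d → ℝ)
    (hα : ∀ i, 0 < α i) (hnorm : ∑ i, (α i) ^ 2 = 1) :
    let γ : ℝ := d / (∑ i : Fin d, ∑ j ∈ Finset.univ.erase i, α i / α j)
    let δ : ℕ → ℂ := fun k =>
      -(((γ / d : ℝ) : ℂ)) * ∑ i : Fin d, ∑ j ∈ Finset.univ.erase i,
        ((α i / α j : ℝ) : ℂ) * (rootOfUnity d) ^ (k * (d - (j : ℕ)))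
    let Ztilde : Matrix (Fin d) (Fin d) ℂ :=
      (((1 + γ : ℝ)) : ℂ) • (1 : Matrix (Fin d) (Fin d) ℂ)
        - ∑ k ∈ Finset.Icc 1 (d - 1), δ k • (clockZ d) ^ k
    Ztilde = Matrix.diagonal (fun l => (((γ / α l) * ∑ i, α i : ℝ) : ℂ)) ∧
    (∀ l : Fin d, 0 < (γ / α l) * ∑ i, α i) ∧ IsUnit Ztilde := by
  intro γ δ Ztilde
  have hd0 : d ≠ 0 := by omega
  haveI : Nonempty (Fin d) := ⟨⟨0, by omega⟩⟩
  set S : ℝ := ∑ i : Fin d, ∑ j ∈ Finset.univ.erase i, α i / α j with hS_def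
  have herase_ne : ∀ i : Fin d, (Finset.univ.erase i).Nonempty := by
    intro i
    rw [← Finset.card_pos, Finset.card_erase_of_mem (Finset.mem_univ i), Finset.card_univ,
      Fintype.card_fin]
    omega
  have hS : 0 < S := by
    apply Finset.sum_pos
    · intro i _
      exact Finset.sum_pos (fun j _ => div_pos (hα i) (hα j)) (herase_ne i)
    · exact Finset.univ_nonempty
  have hγ : 0 < γ := div_pos (by exact_mod_cast Nat.pos_of_ne_zero hd0) hS
  have hsum_pos : 0 < ∑ i, α i := Finset.sum_pos (fun i _ => hα i) Finset.univ_nonempty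
  -- key scalar identity for diagonal entries
  have key : ∀ l : Fin d,
      (((1 + γ : ℝ)) : ℂ) - ∑ k ∈ Finset.Icc 1 (d - 1), δ k * ((rootOfUnity d) ^ (l : ℕ)) ^ k
        = (((γ / α l) * ∑ i, α i : ℝ) : ℂ) := by
    intro l
    have inner : ∀ j : Fin d,
        ∑ k ∈ Finset.Icc 1 (d - 1),
          (rootOfUnity d) ^ (k * (d - (j : ℕ))) * ((rootOfUnity d) ^ (l : ℕ)) ^ k
          = (if j = l then (d : ℂ) else 0) - 1 := by
      intro j
      have hpow : ∀ k, (rootOfUnity d) ^ (k * (d - (j : ℕ))) * ((rootOfUnity d) ^ (l : ℕ)) ^ k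
          = (rootOfUnity d) ^ (k * (d - (j : ℕ) + (l : ℕ))) := by
        intro k
        rw [← pow_mul, ← pow_add]
        congr 1
        ring
      simp only [hpow]
      rw [icc_sum_eq d hd, geo_sum d hd0, Nat.zero_mul, pow_zero]
      congr 1
      by_cases h : j = l
      · rw [if_pos ((dvd_iff_eq d j l).2 h), if_pos h]
      · rw [if_neg (fun hdvd => h ((dvd_iff_eq d j l).1 hdvd)), if_neg h]
    have hsum : ∑ k ∈ Finset.Icc 1 (d - 1), δ k * ((rootOfUnity d) ^ (l : ℕ)) ^ k
        = -(((γ / d : ℝ) : ℂ)) * ∑ i : Fin d, ∑ j ∈ Finset.univ.erase i,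
            ((α i / α j : ℝ) : ℂ) * ((if j = l then (d : ℂ) else 0) - 1) := by
      simp only [δ]
      have key2 : ∑ k ∈ Finset.Icc 1 (d - 1),
          (∑ i : Fin d, ∑ j ∈ Finset.univ.erase i,
            ((α i / α j : ℝ) : ℂ) * (rootOfUnity d) ^ (k * (d - (j : ℕ))))
            * ((rootOfUnity d) ^ (l : ℕ)) ^ k
          = ∑ i : Fin d, ∑ j ∈ Finset.univ.erase i,
              ((α i / α j : ℝ) : ℂ) * ((if j = l then (d : ℂ) else 0) - 1) := by
        simp only [Finset.sum_mul]
        rw [Finset.sum_comm]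
        refine Finset.sum_congr rfl fun i _ => ?_
        rw [Finset.sum_comm]
        refine Finset.sum_congr rfl fun j _ => ?_
        rw [← inner j, Finset.mul_sum]
        exact Finset.sum_congr rfl fun k _ => by ring
      rw [← key2, Finset.mul_sum]
      exact Finset.sum_congr rfl fun k _ => by ring
    have h1 : ∑ i : Fin d, ∑ j ∈ Finset.univ.erase i,
        ((α i / α j : ℝ) : ℂ) * ((if j = l then (d : ℂ) else 0) - 1)
        = (d : ℂ) * ((∑ i ∈ Finset.univ.erase l, α i / α l : ℝ) : ℂ) - ((S : ℝ) : ℂ) := by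
      simp only [mul_sub, mul_one, Finset.sum_sub_distrib]
      congr 1
      · have h2 : ∀ i : Fin d, ∑ j ∈ Finset.univ.erase i,
            ((α i / α j : ℝ) : ℂ) * (if j = l then (d : ℂ) else 0)
            = if i = l then 0 else ((α i / α l : ℝ) : ℂ) * d := by
          intro i
          simp only [mul_ite, mul_zero]
          rw [Finset.sum_ite_eq' (Finset.univ.erase i) l
            (fun j => ((α i / α j : ℝ) : ℂ) * d)]
          by_cases h : i = l
          · subst h; simp
          · rw [if_pos (Finset.mem_erase.2 ⟨Ne.symm h, Finset.mem_univ l⟩), if_neg h]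
        rw [Finset.sum_congr rfl fun i _ => h2 i]
        rw [← Finset.sum_erase Finset.univ (a := l)
          (f := fun i => if i = l then 0 else ((α i / α l : ℝ) : ℂ) * (d : ℂ)) (by simp)]
        rw [Finset.sum_congr rfl fun i hi => if_neg (Finset.ne_of_mem_erase hi)]
        push_cast
        rw [← Finset.sum_mul]
        ring
      · rw [hS_def]
        push_cast
        rfl
    rw [hsum, h1]
    have hT : ∑ i, α i = α l + ∑ i ∈ Finset.univ.erase l, α i :=
      (Finset.add_sum_erase _ _ (Finset.mem_univ l)).symm
    have hγ_def : γ = d / S := rfl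
    have hαl := (hα l).ne'
    have hdR : (d : ℝ) ≠ 0 := Nat.cast_ne_zero.2 hd0
    have hreal : 1 + γ - (-(γ / d) * ((d : ℝ) * (∑ i ∈ Finset.univ.erase l, α i / α l) - S))
        = (γ / α l) * ∑ i, α i := by
      have hB : ∑ i ∈ Finset.univ.erase l, α i / α l
          = (∑ i ∈ Finset.univ.erase l, α i) / α l := (Finset.sum_div _ _ _).symm
      rw [hT, hγ_def, hB]
      field_simp
      ring
    calc (((1 + γ : ℝ)) : ℂ) - -(((γ / d : ℝ) : ℂ)) *
          ((d : ℂ) * ((∑ i ∈ Finset.univ.erase l, α i / α l : ℝ) : ℂ) - ((S : ℝ) : ℂ))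
        = (((1 + γ - (-(γ / d) * ((d : ℝ) * (∑ i ∈ Finset.univ.erase l, α i / α l) - S)) : ℝ)) : ℂ) := by
          push_cast
          ring
      _ = (((γ / α l) * ∑ i, α i : ℝ) : ℂ) := by rw [hreal]
  have hdiag : Ztilde = Matrix.diagonal (fun l => (((γ / α l) * ∑ i, α i : ℝ) : ℂ)) := by
    simp only [Ztilde, clockZ]
    ext x y
    simp only [Matrix.sub_apply, Matrix.smul_apply, Matrix.sum_apply, Matrix.diagonal_pow,
      Matrix.one_apply, Matrix.diagonal_apply, smul_eq_mul, Pi.pow_apply]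
    by_cases h : x = y
    · subst h
      simpa using key x
    · simp [h]
  have hpos : ∀ l : Fin d, 0 < (γ / α l) * ∑ i, α i :=
    fun l => mul_pos (div_pos hγ (hα l)) hsum_pos
  refine ⟨hdiag, hpos, ?_⟩
  rw [hdiag, Matrix.isUnit_iff_isUnit_det, Matrix.det_diagonal]
  rw [isUnit_iff_ne_zero]
  exact Finset.prod_ne_zero_iff.2 fun l _ =>
    Complex.ofReal_ne_zero.2 (hpos l).ne'
end

section
/- Let ρ be a density matrix on ℂ^d ⊗ ℂ^d (d = 2) and suppose (σ_z ⊗ B₀)ρ = ρ and (σ_x ⊗ B₁)ρ = ρ for unitary Hermitian operators B₀, B₁ on ℂ², with Tr₁(ρ) invertible. Then B₀B₁ + B₁B₀ = 0. -/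
open Matrix Kronecker
open scoped ComplexOrder

def sigmaZ : Matrix (Fin 2) (Fin 2) ℂ := !![1, 0; 0, -1]
def sigmaX : Matrix (Fin 2) (Fin 2) ℂ := !![0, 1; 1, 0]

theorem neg_kron {l m n p : Type*} (A : Matrix l m ℂ) (B : Matrix n p ℂ) :
    (-A) ⊗ₖ B = -(A ⊗ₖ B) := by
  ext ⟨i, k⟩ ⟨j, l⟩
  simp [Matrix.kroneckerMap_apply]

theorem anticommutation_from_maximal_violation
    (ρ : Matrix (Fin 2 × Fin 2) (Fin 2 × Fin 2) ℂ) (hρ : ρ.PosSemidef)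
    (htr : ρ.trace = 1) (B0 B1 : Matrix (Fin 2) (Fin 2) ℂ)
    (hB0h : B0.IsHermitian) (hB0u : B0 * B0 = 1)
    (hB1h : B1.IsHermitian) (hB1u : B1 * B1 = 1)
    (h0 : (sigmaZ ⊗ₖ B0) * ρ = ρ) (h1 : (sigmaX ⊗ₖ B1) * ρ = ρ)
    (hinv : IsUnit (Matrix.of fun j j' : Fin 2 => ∑ i : Fin 2, ρ (i, j) (i, j'))) :
    B0 * B1 + B1 * B0 = 0 := by
  set A := B0 * B1 + B1 * B0 with hA
  set C := sigmaX * sigmaZ with hCdef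
  have hzx : sigmaZ * sigmaX = -C := by
    ext i j
    fin_cases i <;> fin_cases j <;> simp [hCdef, Matrix.mul_apply, Fin.sum_univ_two, sigmaZ, sigmaX]
  have e1 : ((sigmaZ * sigmaX) ⊗ₖ (B0 * B1)) * ρ = ρ := by
    rw [Matrix.mul_kronecker_mul, Matrix.mul_assoc, h1, h0]
  have e2 : ((sigmaX * sigmaZ) ⊗ₖ (B1 * B0)) * ρ = ρ := by
    rw [Matrix.mul_kronecker_mul, Matrix.mul_assoc, h0, h1]
  have e1' : (C ⊗ₖ (B0 * B1)) * ρ = -ρ := by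
    rw [hzx, neg_kron, neg_mul, neg_eq_iff_eq_neg] at e1
    exact e1
  have hC : (C ⊗ₖ A) * ρ = 0 := by
    rw [hA, Matrix.kronecker_add, add_mul, e1', e2, neg_add_cancel]
  have hCC : (-C) * C = 1 := by
    ext i j
    fin_cases i <;> fin_cases j <;>
      simp [hCdef, Matrix.mul_apply, Fin.sum_univ_two, sigmaZ, sigmaX, Matrix.one_apply]
  have hone : ((1 : Matrix (Fin 2) (Fin 2) ℂ) ⊗ₖ A) * ρ = 0 := by
    have := congrArg (fun M => ((-C) ⊗ₖ (1 : Matrix (Fin 2) (Fin 2) ℂ)) * M) hC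
    simp only [mul_zero] at this
    rwa [← Matrix.mul_assoc, ← Matrix.mul_kronecker_mul, hCC, one_mul] at this
  set T := (Matrix.of fun j j' : Fin 2 => ∑ i : Fin 2, ρ (i, j) (i, j')) with hT
  have hAT : A * T = 0 := by
    ext j j'
    simp only [Matrix.zero_apply]
    have key : ∀ i : Fin 2, (((1 : Matrix (Fin 2) (Fin 2) ℂ) ⊗ₖ A) * ρ) (i, j) (i, j') = 0 := by
      intro i; rw [hone]; rfl
    have expand : ∀ i : Fin 2,
        (((1 : Matrix (Fin 2) (Fin 2) ℂ) ⊗ₖ A) * ρ) (i, j) (i, j')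
          = ∑ k : Fin 2, A j k * ρ (i, k) (i, j') := by
      intro i
      rw [Matrix.mul_apply]
      rw [Fintype.sum_prod_type]
      simp [Matrix.kroneckerMap_apply, Matrix.one_apply]
    have : ∑ i : Fin 2, ∑ k : Fin 2, A j k * ρ (i, k) (i, j') = 0 := by
      simp only [← expand]
      simp [key]
    calc (A * T) j j' = ∑ k : Fin 2, A j k * ∑ i : Fin 2, ρ (i, k) (i, j') := by
          simp [Matrix.mul_apply, hT]
      _ = ∑ i : Fin 2, ∑ k : Fin 2, A j k * ρ (i, k) (i, j') := by
          simp [Fin.sum_univ_two]; ring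
      _ = 0 := this
  obtain ⟨u, hu⟩ := hinv
  calc A = A * (T * ↑u⁻¹) := by rw [← hu, Units.mul_inv, mul_one]
    _ = (A * T) * ↑u⁻¹ := by rw [Matrix.mul_assoc]
    _ = 0 := by rw [hAT, zero_mul]
end

section
/- Let |ψ⟩ ∈ ℂ² ⊗ ℂ² ⊗ H_E be a unit vector satisfying (σ_z ⊗ σ_z ⊗ 𝟙_E)|ψ⟩ = |ψ⟩ and (σ_x ⊗ σ_x ⊗ 𝟙_E)|ψ⟩ = |ψ⟩. Then |ψ⟩ = (1/√2)(|00⟩ + |11⟩) ⊗ |aux⟩ for some unit vector |aux⟩ ∈ H_E. -/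
theorem bell_state_selftest (m : ℕ) (ψ : Fin 2 × Fin 2 × Fin m → ℂ)
    (hnorm : ∑ x, ‖ψ x‖ ^ 2 = 1)
    (hz : ∀ (i j : Fin 2) (k : Fin m),
      ((-1 : ℂ) ^ (i : ℕ)) * ((-1 : ℂ) ^ (j : ℕ)) * ψ (i, j, k) = ψ (i, j, k))
    (hx : ∀ (i j : Fin 2) (k : Fin m), ψ (i + 1, j + 1, k) = ψ (i, j, k)) :
    ∃ aux : Fin m → ℂ, (∑ k, ‖aux k‖ ^ 2 = 1) ∧
      ∀ (i j : Fin 2) (k : Fin m),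
        ψ (i, j, k) = (if i = j then ((1 / Real.sqrt 2 : ℝ) : ℂ) else 0) * aux k := by
  have h01 : ∀ k, ψ (0, 1, k) = 0 := by
    intro k
    have := hz 0 1 k
    simp at this
    linear_combination (-1/2 : ℂ) * this
  have h10 : ∀ k, ψ (1, 0, k) = 0 := by
    intro k
    have := hz 1 0 k
    simp at this
    linear_combination (-1/2 : ℂ) * this
  have h11 : ∀ k, ψ (1, 1, k) = ψ (0, 0, k) := by
    intro k
    have := hx 0 0 k
    simpa using this
  refine ⟨fun k => (Real.sqrt 2 : ℂ) * ψ (0, 0, k), ?_, ?_⟩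
  · have hsum : ∑ x, ‖ψ x‖ ^ 2 = 2 * ∑ k, ‖ψ (0, 0, k)‖ ^ 2 := by
      rw [Fintype.sum_prod_type, Fin.sum_univ_two]
      rw [Fintype.sum_prod_type, Fintype.sum_prod_type, Fin.sum_univ_two, Fin.sum_univ_two]
      simp only [h01, h10, h11, norm_zero]
      ring_nf
      simp
    have : ∑ k, ‖ψ (0, 0, k)‖ ^ 2 = 1 / 2 := by linarith [hnorm.symm.trans hsum]
    have hs2 : (0:ℝ) < Real.sqrt 2 := Real.sqrt_pos.mpr (by norm_num)
    calc ∑ k, ‖(Real.sqrt 2 : ℂ) * ψ (0, 0, k)‖ ^ 2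
        = ∑ k, 2 * ‖ψ (0, 0, k)‖ ^ 2 := by
          congr 1; ext k
          rw [norm_mul, mul_pow]
          congr 1
          rw [Complex.norm_real, Real.norm_eq_abs, abs_of_pos hs2, Real.sq_sqrt (by norm_num)]
      _ = 1 := by rw [← Finset.mul_sum, this]; ring
  · intro i j k
    have hs2 : Real.sqrt 2 ≠ 0 := by positivity
    fin_cases i <;> fin_cases j <;> simp [h01, h10, h11]
end
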